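/- arXiv:2302.00541 — 2 statements merged into one kernel-verified Lean document; each statement's English description precedes it below -/
import Mathlib

section
/- Every formula of dependence logic, inclusion logic, and independence logic is local: for a team T in 𝒜 with domain X ⊇ Fr(φ), we have 𝒜,T ⊨ φ if and only if 𝒜, T↾Fr(φ) ⊨ φ, where T↾Y = {s↾Y : s ∈ T} is the restriction of the team to Y. -/
/-- First-order terms built from variables and function symbols. -/
inductive Term (F V : Type) (arF : F → ℕ) : Type where
  | var : V → Term F V arF
  | func : (f : F) → (Fin (arF f) → Term F V arF) → Term F V arF

/-- Evaluation of a term under an assignment `s`. -/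
def Term.eval {F V A : Type} {arF : F → ℕ} (fI : (f : F) → (Fin (arF f) → A) → A)
    (s : V → A) : Term F V arF → A
  | .var x => s x
  | .func f ts => fI f fun i => (ts i).eval fI s

/-- Variables occurring in a term. -/
def Term.vars {F V : Type} {arF : F → ℕ} : Term F V arF → Set V
  | .var x => {x}
  | .func _ ts => ⋃ i, (ts i).vars

/-- Formulas of first-order logic in negation normal form, extended by
dependence atoms `dep`, inclusion atoms `inc`, and independence atoms `indep`. -/
inductive TForm (R F V : Type) (arR : R → ℕ) (arF : F → ℕ) : Type where
  | eq  : Term F V arF → Term F V arF → TForm R F V arR arF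
  | neq : Term F V arF → Term F V arF → TForm R F V arR arF
  | rel  : (r : R) → (Fin (arR r) → Term F V arF) → TForm R F V arR arF
  | nrel : (r : R) → (Fin (arR r) → Term F V arF) → TForm R F V arR arF
  | dep : List (Term F V arF) → List (Term F V arF) → TForm R F V arR arF
  | inc : List (Term F V arF) → List (Term F V arF) → TForm R F V arR arF
  | indep : List (Term F V arF) → List (Term F V arF) → List (Term F V arF) →
      TForm R F V arR arF
  | and : TForm R F V arR arF → TForm R F V arR arF → TForm R F V arR arF
  | or  : TForm R F V arR arF → TForm R F V arR arF → TForm R F V arR arF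
  | ex  : V → TForm R F V arR arF → TForm R F V arR arF
  | all : V → TForm R F V arR arF → TForm R F V arR arF

/-- A first-order structure: interpretations of relation and function symbols. -/
structure Str (R F : Type) (arR : R → ℕ) (arF : F → ℕ) (A : Type) where
  relI : (r : R) → (Fin (arR r) → A) → Prop
  funI : (f : F) → (Fin (arF f) → A) → A

/-- Evaluation of a tuple (list) of terms. -/
def evalT {R F V A : Type} {arR : R → ℕ} {arF : F → ℕ} (M : Str R F arR arF A)
    (s : V → A) (ts : List (Term F V arF)) : List A :=
  ts.map (Term.eval M.funI s)

/-- Team semantics.  A team is a set of assignments `V → A`.  Disjunction splits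
the team, `∃x` uses a supplementing function into nonempty sets of values, and
`∀x` uses the full supplemented team. -/
def TSat {R F V A : Type} {arR : R → ℕ} {arF : F → ℕ} [DecidableEq V]
    (M : Str R F arR arF A) : TForm R F V arR arF → Set (V → A) → Prop
  | .eq t u, T => ∀ s ∈ T, t.eval M.funI s = u.eval M.funI s
  | .neq t u, T => ∀ s ∈ T, t.eval M.funI s ≠ u.eval M.funI s
  | .rel r ts, T => ∀ s ∈ T, M.relI r fun i => (ts i).eval M.funI s
  | .nrel r ts, T => ∀ s ∈ T, ¬ M.relI r fun i => (ts i).eval M.funI s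
  | .dep ts us, T => ∀ s₁ ∈ T, ∀ s₂ ∈ T,
      evalT M s₁ ts = evalT M s₂ ts → evalT M s₁ us = evalT M s₂ us
  | .inc ts us, T => ∀ s₁ ∈ T, ∃ s₂ ∈ T, evalT M s₁ ts = evalT M s₂ us
  | .indep ts us vs, T => ∀ s₁ ∈ T, ∀ s₂ ∈ T, evalT M s₁ vs = evalT M s₂ vs →
      ∃ s₃ ∈ T, evalT M s₃ vs = evalT M s₁ vs ∧ evalT M s₃ ts = evalT M s₁ ts ∧
        evalT M s₃ us = evalT M s₂ us
  | .and φ ψ, T => TSat M φ T ∧ TSat M ψ T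
  | .or φ ψ, T => ∃ T₁ T₂ : Set (V → A), T₁ ∪ T₂ = T ∧ TSat M φ T₁ ∧ TSat M ψ T₂
  | .ex x φ, T => ∃ f : (V → A) → Set A, (∀ s ∈ T, (f s).Nonempty) ∧
      TSat M φ {s' | ∃ s ∈ T, ∃ a ∈ f s, s' = Function.update s x a}
  | .all x φ, T => TSat M φ {s' | ∃ s ∈ T, ∃ a : A, s' = Function.update s x a}

/-- Classical Tarski semantics (the value on team atoms is irrelevant and set to `True`). -/
def Sat {R F V A : Type} {arR : R → ℕ} {arF : F → ℕ} [DecidableEq V]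
    (M : Str R F arR arF A) : (V → A) → TForm R F V arR arF → Prop
  | s, .eq t u => t.eval M.funI s = u.eval M.funI s
  | s, .neq t u => t.eval M.funI s ≠ u.eval M.funI s
  | s, .rel r ts => M.relI r fun i => (ts i).eval M.funI s
  | s, .nrel r ts => ¬ M.relI r fun i => (ts i).eval M.funI s
  | _, .dep _ _ => True
  | _, .inc _ _ => True
  | _, .indep _ _ _ => True
  | s, .and φ ψ => Sat M s φ ∧ Sat M s ψ
  | s, .or φ ψ => Sat M s φ ∨ Sat M s ψ
  | s, .ex x φ => ∃ a : A, Sat M (Function.update s x a) φ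
  | s, .all x φ => ∀ a : A, Sat M (Function.update s x a) φ

/-- A pure first-order formula: no dependence, inclusion, or independence atoms. -/
def TForm.IsFO {R F V : Type} {arR : R → ℕ} {arF : F → ℕ} :
    TForm R F V arR arF → Prop
  | .dep _ _ => False
  | .inc _ _ => False
  | .indep _ _ _ => False
  | .and φ ψ => φ.IsFO ∧ ψ.IsFO
  | .or φ ψ => φ.IsFO ∧ ψ.IsFO
  | .ex _ φ => φ.IsFO
  | .all _ φ => φ.IsFO
  | _ => True

/-- A dependence logic formula: no inclusion or independence atoms. -/
def TForm.IsDep {R F V : Type} {arR : R → ℕ} {arF : F → ℕ} :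
    TForm R F V arR arF → Prop
  | .inc _ _ => False
  | .indep _ _ _ => False
  | .and φ ψ => φ.IsDep ∧ ψ.IsDep
  | .or φ ψ => φ.IsDep ∧ ψ.IsDep
  | .ex _ φ => φ.IsDep
  | .all _ φ => φ.IsDep
  | _ => True

/-- An inclusion logic formula: no dependence or independence atoms. -/
def TForm.IsInc {R F V : Type} {arR : R → ℕ} {arF : F → ℕ} :
    TForm R F V arR arF → Prop
  | .dep _ _ => False
  | .indep _ _ _ => False
  | .and φ ψ => φ.IsInc ∧ ψ.IsInc
  | .or φ ψ => φ.IsInc ∧ ψ.IsInc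
  | .ex _ φ => φ.IsInc
  | .all _ φ => φ.IsInc
  | _ => True

/-- An independence logic formula: no dependence or inclusion atoms. -/
def TForm.IsInd {R F V : Type} {arR : R → ℕ} {arF : F → ℕ} :
    TForm R F V arR arF → Prop
  | .dep _ _ => False
  | .inc _ _ => False
  | .and φ ψ => φ.IsInd ∧ ψ.IsInd
  | .or φ ψ => φ.IsInd ∧ ψ.IsInd
  | .ex _ φ => φ.IsInd
  | .all _ φ => φ.IsInd
  | _ => True

/-- Variables of a list of terms. -/
def varsL {F V : Type} {arF : F → ℕ} (ts : List (Term F V arF)) : Set V :=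
  ⋃ t ∈ ts, Term.vars t

/-- Free variables of a formula. -/
def TForm.fr {R F V : Type} {arR : R → ℕ} {arF : F → ℕ} :
    TForm R F V arR arF → Set V
  | .eq t u => t.vars ∪ u.vars
  | .neq t u => t.vars ∪ u.vars
  | .rel _ ts => ⋃ i, (ts i).vars
  | .nrel _ ts => ⋃ i, (ts i).vars
  | .dep ts us => varsL ts ∪ varsL us
  | .inc ts us => varsL ts ∪ varsL us
  | .indep ts us vs => varsL ts ∪ varsL us ∪ varsL vs
  | .and φ ψ => φ.fr ∪ ψ.fr
  | .or φ ψ => φ.fr ∪ ψ.fr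
  | .ex x φ => φ.fr \ {x}
  | .all x φ => φ.fr \ {x}

open Classical in
/-- The restriction `T↾X` of a team to a set of variables, realized by setting
all variables outside `X` to the default value. -/
noncomputable def restrictTeam {V A : Type} [Inhabited A] (X : Set V)
    (T : Set (V → A)) : Set (V → A) :=
  (fun s v => if v ∈ X then s v else default) '' T


lemma Term.eval_congr {F V A : Type} {arF : F → ℕ} (fI : (f : F) → (Fin (arF f) → A) → A)
    {s s' : V → A} : ∀ (t : Term F V arF), (∀ v ∈ t.vars, s v = s' v) →
    t.eval fI s = t.eval fI s'
  | .var x, h => h x (by simp [Term.vars])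
  | .func f ts, h => by
      simp only [Term.eval]
      congr 1
      funext i
      exact Term.eval_congr fI (ts i) fun v hv => h v (by simp only [Term.vars, Set.mem_iUnion]; exact ⟨i, hv⟩)

lemma evalT_congr {R F V A : Type} {arR : R → ℕ} {arF : F → ℕ} (M : Str R F arR arF A)
    (ts : List (Term F V arF)) {s s' : V → A}
    (h : ∀ v ∈ varsL ts, s v = s' v) : evalT M s ts = evalT M s' ts := by
  simp only [evalT]
  apply List.map_congr_left
  intro t ht
  exact Term.eval_congr _ t fun v hv => h v (by
    simp only [varsL, Set.mem_iUnion]; exact ⟨t, ht, hv⟩)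

lemma TSat_invariant {R F V A : Type} {arR : R → ℕ} {arF : F → ℕ} [DecidableEq V]
    (M : Str R F arR arF A) (φ : TForm R F V arR arF) :
    ∀ (X : Set V), φ.fr ⊆ X →
    ∀ (T T' : Set (V → A)),
    (∀ s ∈ T, ∃ s' ∈ T', ∀ v ∈ X, s v = s' v) →
    (∀ s' ∈ T', ∃ s ∈ T, ∀ v ∈ X, s v = s' v) →
    TSat M φ T → TSat M φ T' := by
  induction φ with
  | eq t u =>
    intro X hX T T' h₁ h₂ h s' hs'
    obtain ⟨s, hs, hag⟩ := h₂ s' hs'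
    rw [← Term.eval_congr M.funI t fun v hv => hag v (hX (Or.inl hv)),
        ← Term.eval_congr M.funI u fun v hv => hag v (hX (Or.inr hv))]
    exact h s hs
  | neq t u =>
    intro X hX T T' h₁ h₂ h s' hs'
    obtain ⟨s, hs, hag⟩ := h₂ s' hs'
    rw [← Term.eval_congr M.funI t fun v hv => hag v (hX (Or.inl hv)),
        ← Term.eval_congr M.funI u fun v hv => hag v (hX (Or.inr hv))]
    exact h s hs
  | rel r ts =>
    intro X hX T T' h₁ h₂ h s' hs'
    obtain ⟨s, hs, hag⟩ := h₂ s' hs'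
    have : (fun i => (ts i).eval M.funI s') = fun i => (ts i).eval M.funI s := by
      funext i
      exact (Term.eval_congr M.funI (ts i) fun v hv => hag v
        (hX (Set.mem_iUnion.mpr ⟨i, hv⟩))).symm
    rw [this]
    exact h s hs
  | nrel r ts =>
    intro X hX T T' h₁ h₂ h s' hs'
    obtain ⟨s, hs, hag⟩ := h₂ s' hs'
    have : (fun i => (ts i).eval M.funI s') = fun i => (ts i).eval M.funI s := by
      funext i
      exact (Term.eval_congr M.funI (ts i) fun v hv => hag v
        (hX (Set.mem_iUnion.mpr ⟨i, hv⟩))).symm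
    rw [this]
    exact h s hs
  | dep ts us =>
    intro X hX T T' h₁ h₂ h s₁' hs₁' s₂' hs₂' heq
    obtain ⟨s₁, hs₁, hag₁⟩ := h₂ s₁' hs₁'
    obtain ⟨s₂, hs₂, hag₂⟩ := h₂ s₂' hs₂'
    have e1 : evalT M s₁ ts = evalT M s₁' ts :=
      evalT_congr M ts fun v hv => hag₁ v (hX (Or.inl hv))
    have e2 : evalT M s₂ ts = evalT M s₂' ts :=
      evalT_congr M ts fun v hv => hag₂ v (hX (Or.inl hv))
    have e3 : evalT M s₁ us = evalT M s₁' us :=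
      evalT_congr M us fun v hv => hag₁ v (hX (Or.inr hv))
    have e4 : evalT M s₂ us = evalT M s₂' us :=
      evalT_congr M us fun v hv => hag₂ v (hX (Or.inr hv))
    rw [← e3, ← e4]
    exact h s₁ hs₁ s₂ hs₂ (by rw [e1, e2, heq])
  | inc ts us =>
    intro X hX T T' h₁ h₂ h s₁' hs₁'
    obtain ⟨s₁, hs₁, hag₁⟩ := h₂ s₁' hs₁'
    obtain ⟨s₂, hs₂, he⟩ := h s₁ hs₁
    obtain ⟨s₂', hs₂', hag₂⟩ := h₁ s₂ hs₂
    refine ⟨s₂', hs₂', ?_⟩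
    rw [← evalT_congr M ts fun v hv => hag₁ v (hX (Or.inl hv)), he]
    exact evalT_congr M us fun v hv => hag₂ v (hX (Or.inr hv))
  | indep ts us vs =>
    intro X hX T T' h₁ h₂ h s₁' hs₁' s₂' hs₂' heq
    obtain ⟨s₁, hs₁, hag₁⟩ := h₂ s₁' hs₁'
    obtain ⟨s₂, hs₂, hag₂⟩ := h₂ s₂' hs₂'
    have ets : ∀ s s' : V → A, (∀ v ∈ X, s v = s' v) → evalT M s ts = evalT M s' ts :=
      fun s s' hag => evalT_congr M ts fun v hv => hag v (hX (Or.inl (Or.inl hv)))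
    have eus : ∀ s s' : V → A, (∀ v ∈ X, s v = s' v) → evalT M s us = evalT M s' us :=
      fun s s' hag => evalT_congr M us fun v hv => hag v (hX (Or.inl (Or.inr hv)))
    have evs : ∀ s s' : V → A, (∀ v ∈ X, s v = s' v) → evalT M s vs = evalT M s' vs :=
      fun s s' hag => evalT_congr M vs fun v hv => hag v (hX (Or.inr hv))
    obtain ⟨s₃, hs₃, hv1, hv2, hv3⟩ := h s₁ hs₁ s₂ hs₂
      (by rw [evs _ _ hag₁, evs _ _ hag₂, heq])
    obtain ⟨s₃', hs₃', hag₃⟩ := h₁ s₃ hs₃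
    refine ⟨s₃', hs₃', ?_, ?_, ?_⟩
    · rw [← evs _ _ hag₃, ← evs _ _ hag₁, hv1]
    · rw [← ets _ _ hag₃, ← ets _ _ hag₁, hv2]
    · rw [← eus _ _ hag₃, ← eus _ _ hag₂, hv3]
  | and φ ψ ihφ ihψ =>
    intro X hX T T' h₁ h₂ h
    exact ⟨ihφ X (fun v hv => hX (Or.inl hv)) T T' h₁ h₂ h.1,
           ihψ X (fun v hv => hX (Or.inr hv)) T T' h₁ h₂ h.2⟩
  | or φ ψ ihφ ihψ =>
    intro X hX T T' h₁ h₂ h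
    obtain ⟨T₁, T₂, hun, hφ, hψ⟩ := h
    refine ⟨{s' ∈ T' | ∃ s₁ ∈ T₁, ∀ v ∈ X, s₁ v = s' v},
            {s' ∈ T' | ∃ s₂ ∈ T₂, ∀ v ∈ X, s₂ v = s' v}, ?_, ?_, ?_⟩
    · apply Set.Subset.antisymm
      · rintro s' (⟨hs', _⟩ | ⟨hs', _⟩) <;> exact hs'
      · intro s' hs'
        obtain ⟨s, hs, hag⟩ := h₂ s' hs'
        rw [← hun] at hs
        rcases hs with hs | hs
        · exact Or.inl ⟨hs', s, hs, hag⟩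
        · exact Or.inr ⟨hs', s, hs, hag⟩
    · apply ihφ X (fun v hv => hX (Or.inl hv)) T₁ _ ?_ ?_ hφ
      · intro s hs
        obtain ⟨s', hs', hag⟩ := h₁ s (hun ▸ Or.inl hs)
        exact ⟨s', ⟨hs', s, hs, hag⟩, hag⟩
      · rintro s' ⟨hs', s, hs, hag⟩
        exact ⟨s, hs, hag⟩
    · apply ihψ X (fun v hv => hX (Or.inr hv)) T₂ _ ?_ ?_ hψ
      · intro s hs
        obtain ⟨s', hs', hag⟩ := h₁ s (hun ▸ Or.inr hs)
        exact ⟨s', ⟨hs', s, hs, hag⟩, hag⟩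
      · rintro s' ⟨hs', s, hs, hag⟩
        exact ⟨s, hs, hag⟩
  | ex x φ ih =>
    intro X hX T T' h₁ h₂ h
    obtain ⟨f, hf, hsat⟩ := h
    have hfr : φ.fr ⊆ X ∪ {x} := by
      intro v hv
      by_cases hvx : v = x
      · exact Or.inr (by simp [hvx])
      · exact Or.inl (hX ⟨hv, hvx⟩)
    refine ⟨fun s' => {a | ∃ s ∈ T, (∀ v ∈ X, s v = s' v) ∧ a ∈ f s}, ?_, ?_⟩
    · intro s' hs'
      obtain ⟨s, hs, hag⟩ := h₂ s' hs'
      obtain ⟨a, ha⟩ := hf s hs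
      exact ⟨a, s, hs, hag, ha⟩
    · apply ih (X ∪ {x}) hfr _ _ ?_ ?_ hsat
      · rintro s'' ⟨s, hs, a, ha, rfl⟩
        obtain ⟨s', hs', hag⟩ := h₁ s hs
        refine ⟨Function.update s' x a, ⟨s', hs', a, ⟨s, hs, hag, ha⟩, rfl⟩, ?_⟩
        intro v hv
        by_cases hvx : v = x
        · subst hvx; simp
        · rcases hv with hv | hv
          · simp only [Function.update_of_ne hvx]; exact hag v hv
          · exact absurd hv hvx
      · rintro s'' ⟨s', hs', a, ⟨s, hs, hag, ha⟩, rfl⟩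
        refine ⟨Function.update s x a, ⟨s, hs, a, ha, rfl⟩, ?_⟩
        intro v hv
        by_cases hvx : v = x
        · subst hvx; simp
        · rcases hv with hv | hv
          · simp only [Function.update_of_ne hvx]; exact hag v hv
          · exact absurd hv hvx
  | all x φ ih =>
    intro X hX T T' h₁ h₂ h
    have hfr : φ.fr ⊆ X ∪ {x} := by
      intro v hv
      by_cases hvx : v = x
      · exact Or.inr (by simp [hvx])
      · exact Or.inl (hX ⟨hv, hvx⟩)
    apply ih (X ∪ {x}) hfr _ _ ?_ ?_ h
    · rintro s'' ⟨s, hs, a, rfl⟩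
      obtain ⟨s', hs', hag⟩ := h₁ s hs
      refine ⟨Function.update s' x a, ⟨s', hs', a, rfl⟩, ?_⟩
      intro v hv
      by_cases hvx : v = x
      · subst hvx; simp
      · rcases hv with hv | hv
        · simp only [Function.update_of_ne hvx]; exact hag v hv
        · exact absurd hv hvx
    · rintro s'' ⟨s', hs', a, rfl⟩
      obtain ⟨s, hs, hag⟩ := h₂ s' hs'
      refine ⟨Function.update s x a, ⟨s, hs, a, rfl⟩, ?_⟩
      intro v hv
      by_cases hvx : v = x
      · subst hvx; simp
      · rcases hv with hv | hv
        · simp only [Function.update_of_ne hvx]; exact hag v hv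
        · exact absurd hv hvx

lemma restrictTeam_cond {V A : Type} [Inhabited A] (X : Set V) (T : Set (V → A)) :
    (∀ s ∈ T, ∃ s' ∈ restrictTeam X T, ∀ v ∈ X, s v = s' v) ∧
    (∀ s' ∈ restrictTeam X T, ∃ s ∈ T, ∀ v ∈ X, s v = s' v) := by
  constructor
  · intro s hs
    refine ⟨_, ⟨s, hs, rfl⟩, fun v hv => ?_⟩
    simp only [if_pos hv]
  · rintro s' ⟨s, hs, rfl⟩
    exact ⟨s, hs, fun v hv => by simp only [if_pos hv]⟩

/-- Locality. Every formula of dependence, inclusion, and independence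
logic (i.e. every formula of the common extension) satisfies
`𝒜,T ⊨ φ ↔ 𝒜,T↾Fr(φ) ⊨ φ`. -/
theorem locality {R F V A : Type} {arR : R → ℕ} {arF : F → ℕ} [DecidableEq V] [Inhabited A]
    (M : Str R F arR arF A) (φ : TForm R F V arR arF) (T : Set (V → A)) :
    TSat M φ T ↔ TSat M φ (restrictTeam φ.fr T) := by
  constructor
  · exact TSat_invariant M φ φ.fr subset_rfl T _
      (restrictTeam_cond φ.fr T).1 (restrictTeam_cond φ.fr T).2
  · exact TSat_invariant M φ φ.fr subset_rfl _ T
      (fun s' hs' => by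
        obtain ⟨s, hs, hag⟩ := (restrictTeam_cond φ.fr T).2 s' hs'
        exact ⟨s, hs, fun v hv => (hag v hv).symm⟩)
      (fun s hs => by
        obtain ⟨s', hs', hag⟩ := (restrictTeam_cond φ.fr T).1 s hs
        exact ⟨s', hs', fun v hv => (hag v hv).symm⟩)
end

section
/- Let G = (V,E) be a finite graph and let φ(z) := ∀x ∃y (y ⊆ z ∧ (E(x,y) ∨ x = y)) be the inclusion logic formula with single free variable z. Then for every k ≥ 1: G has a dominating set of size k if and only if there exists a team T with domain {z}, |T| = k, and G,T ⊨ φ. -/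
/-- The structure corresponding to a graph: one binary relation symbol. -/
def graphStr {V : Type} (E : V → V → Prop) :
    Str Unit Empty (fun _ => 2) (fun e => e.elim) V :=
  ⟨fun _ v => E (v 0) (v 1), fun e => e.elim⟩

/-- The inclusion logic formula `φ(z) := ∀x ∃y (y ⊆ z ∧ (E(x,y) ∨ x = y))`
(variables `z = 0`, `x = 1`, `y = 2`). -/
def domForm : TForm Unit Empty (Fin 3) (fun _ => 2) (fun e => e.elim) :=
  .all 1 (.ex 2 (.and (.inc [.var 2] [.var 0])
    (.or (.rel () ![.var 1, .var 2]) (.eq (.var 1) (.var 2)))))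

/-- For k ≥ 1, a finite graph has a dominating set of size k iff
`∀x ∃y (y ⊆ z ∧ (E(x,y) ∨ x = y))` has a satisfying team of size k with domain {z}.
Teams with domain `{z}` are represented by teams of constant assignments. -/
theorem dominatingSet_iff_team {V : Type} [Fintype V] [DecidableEq V] (E : V → V → Prop)
    (hsymm : Symmetric E) (k : ℕ) (hk : 1 ≤ k) :
    (∃ S : Finset V, S.card = k ∧ ∀ v : V, v ∉ S → ∃ u ∈ S, E v u) ↔
    (∃ T : Finset (Fin 3 → V), (∀ s ∈ T, ∀ v : Fin 3, s v = s 0) ∧ T.card = k ∧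
      TSat (graphStr E) domForm (↑T : Set (Fin 3 → V))) := by
  constructor
  · rintro ⟨S, hScard, hSdom⟩
    -- choose for each x a dominator in S
    have hchoice : ∀ x : V, ∃ y, y ∈ S ∧ (E x y ∨ x = y) := by
      intro x
      by_cases hx : x ∈ S
      · exact ⟨x, hx, Or.inr rfl⟩
      · obtain ⟨u, hu, hE⟩ := hSdom x hx
        exact ⟨u, hu, Or.inl hE⟩
    choose dm hdmS hdmE using hchoice
    refine ⟨S.image (fun v => (fun _ => v : Fin 3 → V)), ?_, ?_, ?_⟩
    · intro s hs v
      simp only [Finset.mem_image] at hs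
      obtain ⟨w, _, rfl⟩ := hs
      rfl
    · rw [Finset.card_image_of_injective _ (fun a b h => congrFun h 0), hScard]
    · show TSat (graphStr E) (.ex 2 (.and (.inc [.var 2] [.var 0])
        (.or (.rel () ![.var 1, .var 2]) (.eq (.var 1) (.var 2))))) _
      refine ⟨fun s' => {dm (s' 1)}, fun s _ => ⟨dm (s 1), rfl⟩, ?_, ?_⟩
      · -- inclusion atom
        intro s₁ hs₁
        obtain ⟨s', hs', a, ha, rfl⟩ := hs₁
        obtain ⟨s, hs, b, rfl⟩ := hs'
        simp only [Set.mem_singleton_iff] at ha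
        simp only [Finset.coe_image, Set.mem_image, Finset.mem_coe,
          Finset.mem_image] at hs
        obtain ⟨w, hw, rfl⟩ := hs
        -- value at position 2 is a = dm b' where b' = (update _ 1 b) 1 = b
        have hb1 : (Function.update (fun _ => w : Fin 3 → V) 1 b) 1 = b := by
          simp
        rw [hb1] at ha
        subst ha
        -- witness: constant assignment at dm b, updated
        refine ⟨Function.update (Function.update (fun _ => dm b : Fin 3 → V) 1 b) 2
          (dm ((Function.update (fun _ => dm b : Fin 3 → V) 1 b) 1)),
          ⟨Function.update (fun _ => dm b : Fin 3 → V) 1 b,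
            ⟨(fun _ => dm b), ?_, b, rfl⟩, _, rfl, rfl⟩, ?_⟩
        · simp only [Finset.coe_image, Set.mem_image, Finset.mem_coe]
          exact ⟨dm b, hdmS b, rfl⟩
        · simp [evalT, Term.eval, Function.update_of_ne]
      · -- disjunction split
        set T'' : Set (Fin 3 → V) := {s'' | ∃ s' ∈ {s' | ∃ s ∈
            (↑(S.image (fun v => (fun _ => v : Fin 3 → V))) : Set (Fin 3 → V)),
            ∃ a : V, s' = Function.update s 1 a},
          ∃ a ∈ ({dm (s' 1)} : Set V), s'' = Function.update s' 2 a} with hT''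
        refine ⟨{s ∈ T'' | E (s 1) (s 2)}, {s ∈ T'' | s 1 = s 2}, ?_, ?_, ?_⟩
        · ext s''
          simp only [Set.mem_union, Set.mem_setOf_eq]
          constructor
          · rintro (⟨h, _⟩ | ⟨h, _⟩) <;> exact h
          · intro h
            obtain ⟨s', hs', a, ha, rfl⟩ := h
            simp only [Set.mem_singleton_iff] at ha
            subst ha
            have h1 : (Function.update s' 2 (dm (s' 1))) 1 = s' 1 := by simp
            have h2 : (Function.update s' 2 (dm (s' 1))) 2 = dm (s' 1) := by simp
            rcases hdmE (s' 1) with hE | hEq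
            · exact Or.inl ⟨⟨s', hs', dm (s' 1), rfl, rfl⟩, by rw [h1, h2]; exact hE⟩
            · exact Or.inr ⟨⟨s', hs', dm (s' 1), rfl, rfl⟩, by rw [h1, h2, ← hEq]⟩
        · intro s hs
          simp only [graphStr, Term.eval]
          simpa [Term.eval] using hs.2
        · intro s hs
          simpa [Term.eval] using hs.2
  · rintro ⟨T, hconst, hcard, hsat⟩
    refine ⟨T.image (fun s => s 0), ?_, ?_⟩
    · rw [Finset.card_image_of_injOn, hcard]
      intro s hs t ht h
      funext v
      rw [hconst s hs v, hconst t ht v]; exact h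
    · intro v hv
      obtain ⟨s, hs⟩ : T.Nonempty := Finset.card_pos.mp (by omega)
      obtain ⟨f, hne, hχ⟩ := hsat
      obtain ⟨hinc, hor⟩ := hχ
      have hs' : Function.update s 1 v ∈ {s' | ∃ s ∈ (↑T : Set (Fin 3 → V)),
          ∃ a : V, s' = Function.update s 1 a} := ⟨s, hs, v, rfl⟩
      obtain ⟨a, ha⟩ := hne _ hs'
      have hs'' : Function.update (Function.update s 1 v) 2 a ∈
          {s'' | ∃ s' ∈ {s' | ∃ s ∈ (↑T : Set (Fin 3 → V)), ∃ a : V,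
            s' = Function.update s 1 a}, ∃ a ∈ f s',
            s'' = Function.update s' 2 a} := ⟨_, hs', a, ha, rfl⟩
      -- every member of the team has 0-value in the 0-values of T
      have hzero : ∀ s₂ ∈ {s'' | ∃ s' ∈ {s' | ∃ s ∈ (↑T : Set (Fin 3 → V)), ∃ a : V,
            s' = Function.update s 1 a}, ∃ a ∈ f s',
            s'' = Function.update s' 2 a}, ∃ t ∈ T, s₂ 0 = t 0 := by
        rintro s₂ ⟨s', ⟨t, ht, b, rfl⟩, c, _, rfl⟩
        refine ⟨t, ht, ?_⟩
        simp [Function.update_of_ne]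
      obtain ⟨s₂, hs₂, heq⟩ := hinc _ hs''
      simp only [evalT, List.map, Term.eval, List.cons.injEq, and_true] at heq
      have h2 : (Function.update (Function.update s 1 v) 2 a) 2 = a := by simp
      have h1 : (Function.update (Function.update s 1 v) 2 a) 1 = v := by simp
      have haS : a ∈ T.image (fun s => s 0) := by
        obtain ⟨t, ht, ht0⟩ := hzero _ hs₂
        rw [h2, ht0] at heq
        rw [heq]
        exact Finset.mem_image_of_mem _ ht
      obtain ⟨T₁, T₂, hun, hrel, heqp⟩ := hor
      have : Function.update (Function.update s 1 v) 2 a ∈ T₁ ∪ T₂ := by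
        rw [hun]; exact hs''
      rcases this with h | h
      · have := hrel _ h
        simp only [graphStr, Term.eval] at this
        refine ⟨a, haS, ?_⟩
        have : E ((Function.update (Function.update s 1 v) 2 a) 1)
            ((Function.update (Function.update s 1 v) 2 a) 2) := by
          convert this using 2 <;> simp [Matrix.cons_val_zero, Matrix.cons_val_one, Term.eval]
        rwa [h1, h2] at this
      · have := heqp _ h
        simp only [Term.eval] at this
        rw [h1, h2] at this
        rw [this] at hv
        exact absurd haS hv
end
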